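/- For a quiver Q satisfying condition (b) and vertex i ∈ Q₀, the tuple (l_Q(i,j))_{j∈Q₀} lies in L(Q), and it is the unique maximal element (w.r.t. coordinatewise order) among elements (r_j) of L(Q) with r_i = 0. Equivalently, T(i) = ⊕_j τ^{-l_Q(i,j)}P(j) is the unique minimal element of lk_p(P(i)). -/
import Mathlib


/-! Combinatorics of quivers: walks in the double quiver, the function `l_Q`,
paths, acyclicity, condition (b), unique sources, and the set `L(Q)`.
A quiver on a vertex type `V` is encoded by its family of arrow types
`H : V → V → Type`. -/

/-- Walks in the double quiver `Q̃` of the quiver `Q` encoded by `H`: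
a step may traverse an arrow forwards (`fwd`) or backwards (`bwd`). -/
inductive DWalk {V : Type} (H : V → V → Type) : V → V → Type where
  | nil : (a : V) → DWalk H a a
  | fwd : {a b c : V} → DWalk H a b → H b c → DWalk H a c
  | bwd : {a b c : V} → DWalk H a b → H c b → DWalk H a c

/-- `c⁺(w)`: the number of forward (original) arrows used by a walk in `Q̃`. -/
def DWalk.cplus {V : Type} {H : V → V → Type} : {a b : V} → DWalk H a b → ℕ
  | _, _, .nil _ => 0
  | _, _, .fwd w _ => DWalk.cplus w + 1
  | _, _, .bwd w _ => DWalk.cplus w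

/-- `l_Q(i,j)`: the minimal number of forward arrows over all walks from `i`
to `j` in the double quiver `Q̃`.  (In particular `l_Q(i,i) = 0`.) -/
noncomputable def ell {V : Type} (H : V → V → Type) (i j : V) : ℕ :=
  sInf {m | ∃ w : DWalk H i j, DWalk.cplus w = m}

/-- Directed paths in the quiver `Q` itself. -/
inductive QPath {V : Type} (H : V → V → Type) : V → V → Type where
  | nil : (a : V) → QPath H a a
  | cons : {a b c : V} → QPath H a b → H b c → QPath H a c

def QPath.length {V : Type} {H : V → V → Type} : {a b : V} → QPath H a b → ℕ
  | _, _, .nil _ => 0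
  | _, _, .cons p _ => QPath.length p + 1

/-- `Q` has no loops and no (nontrivial, directed) cycles. -/
def QuiverAcyclic {V : Type} (H : V → V → Type) : Prop :=
  ∀ (a : V) (p : QPath H a a), QPath.length p = 0

/-- `Q` is connected (any two vertices are joined by a walk in `Q̃`). -/
def QuiverConnected {V : Type} (H : V → V → Type) : Prop :=
  ∀ a b : V, Nonempty (DWalk H a b)

/-- Condition (b): for every vertex `x`, `#s(x) + #t(x) > 1`. -/
def CondB {V : Type} (H : V → V → Type) [Fintype V] [∀ a b, Fintype (H a b)] : Prop :=
  ∀ x : V, 1 < ∑ y : V, (Fintype.card (H x y) + Fintype.card (H y x))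

/-- `s` is the unique source (vertex with no incoming arrows) of `Q`. -/
def UniqueSource {V : Type} (H : V → V → Type) (s : V) : Prop :=
  (∀ y : V, IsEmpty (H y s)) ∧ ∀ t : V, (∀ y : V, IsEmpty (H y t)) → t = s

/-- The set `L(Q) = {(r_i) ∈ ℤ_{≥0}^{Q₀} ∣ r_j ≤ r_i + l_Q(i,j) for all i,j}`. -/
def LSet {V : Type} (H : V → V → Type) : Set (V → ℕ) :=
  {r | ∀ i j : V, r j ≤ r i + ell H i j}


def DWalk.append {V : Type} {H : V → V → Type} :
    {a b c : V} → DWalk H a b → DWalk H b c → DWalk H a c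
  | _, _, _, w, .nil _ => w
  | _, _, _, w, .fwd w' h => .fwd (w.append w') h
  | _, _, _, w, .bwd w' h => .bwd (w.append w') h

theorem DWalk.cplus_append {V : Type} {H : V → V → Type} :
    {a b c : V} → (w : DWalk H a b) → (w' : DWalk H b c) →
    (w.append w').cplus = w.cplus + w'.cplus
  | _, _, _, _, .nil _ => by simp [DWalk.append, DWalk.cplus]
  | _, _, _, w, .fwd w' h => by
      simp [DWalk.append, DWalk.cplus, DWalk.cplus_append w w', Nat.add_assoc]
  | _, _, _, w, .bwd w' h => by
      simp [DWalk.append, DWalk.cplus, DWalk.cplus_append w w']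

theorem ell_self {V : Type} (H : V → V → Type) (i : V) : ell H i i = 0 :=
  Nat.sInf_eq_zero.2 (Or.inl ⟨DWalk.nil i, by simp [DWalk.cplus]⟩)

theorem ell_triangle {V : Type} (H : V → V → Type) (hconn : QuiverConnected H)
    (a b c : V) : ell H a c ≤ ell H a b + ell H b c := by
  obtain ⟨w1⟩ := hconn a b
  obtain ⟨w2⟩ := hconn b c
  have h1 : ell H a b ∈ {m | ∃ w : DWalk H a b, DWalk.cplus w = m} :=
    Nat.sInf_mem ⟨_, w1, rfl⟩
  have h2 : ell H b c ∈ {m | ∃ w : DWalk H b c, DWalk.cplus w = m} :=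
    Nat.sInf_mem ⟨_, w2, rfl⟩
  obtain ⟨u1, hu1⟩ := h1
  obtain ⟨u2, hu2⟩ := h2
  calc ell H a c ≤ (u1.append u2).cplus := Nat.sInf_le ⟨_, rfl⟩
    _ = ell H a b + ell H b c := by rw [DWalk.cplus_append, hu1, hu2]

/-- For a finite connected acyclic quiver `Q` satisfying
condition (b) and a vertex `i`, the tuple `(l_Q(i,j))_{j ∈ Q₀}` lies in `L(Q)`;
its `i`-th coordinate is `0`; and it is the unique maximal element (w.r.t. the
coordinatewise order) among the elements `(r_j)` of `L(Q)` with `r_i = 0`.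
Equivalently, `T(i) = ⊕_j τ^{-l_Q(i,j)} P(j)` is the unique minimal element of
`lk_p(P(i))`. -/
theorem Ti_unique_minimal {V : Type} [Fintype V]
    (H : V → V → Type) [∀ a b, Fintype (H a b)]
    (hacyc : QuiverAcyclic H) (hconn : QuiverConnected H) (hb : CondB H)
    (i : V) :
    (fun j => ell H i j) ∈ LSet H ∧ ell H i i = 0 ∧
      ∀ r ∈ LSet H, r i = 0 → ∀ j, r j ≤ ell H i j := by
  refine ⟨fun k j => ?_, ell_self H i, fun r hr hri j => ?_⟩
  · exact ell_triangle H hconn i k j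
  · have := hr i j
    simpa [hri] using this
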